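/- With φ_L, φ_R as above and defining ψ_L(0) = ψ_R(0) = −1/z, ψ_L(ζ) = −(d_R−1)^{−1/2}·φ_L(ζ)·ψ_R(ζ−1), ψ_R(ζ) = −(d_R−1)^{−1/2}·φ_R(ζ)·ψ_L(ζ−1), one has ψ_L(2ζ) = ψ_R(2ζ) = −(d_R−1)^{−ζ}/(z·q_ζ(z)) for all ζ ≥ 0. -/

import Mathlib

/-- `Qc α z n = q_{n-1}(z)`: shifted Chebyshev polynomials with `q_{−1} = 0`,
`q_0 = 1`, `q_n = (z² − α⁻¹ − 1)q_{n−1} − α⁻¹q_{n−2}`. -/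
noncomputable def Qc (α z : ℂ) : ℕ → ℂ
  | 0 => 0
  | 1 => 1
  | n + 2 => (z ^ 2 - α⁻¹ - 1) * Qc α z (n + 1) - α⁻¹ * Qc α z n

/-- `(φ_L(n), φ_R(n))`: `φ_L(0) = φ_R(0) = −1/z`,
`φ_L(n) = −(z + α⁻¹ φ_R(n−1))⁻¹`, `φ_R(n) = −(z + φ_L(n−1))⁻¹`. -/
noncomputable def phiPair (α z : ℂ) : ℕ → ℂ × ℂ
  | 0 => (-1 / z, -1 / z)
  | n + 1 => (-(z + α⁻¹ * (phiPair α z n).2)⁻¹, -(z + (phiPair α z n).1)⁻¹)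

/-- `(ψ_L(n), ψ_R(n))` with `c = (d_R−1)^{−1/2}`: `ψ_L(0) = ψ_R(0) = −1/z`,
`ψ_L(n) = −c·φ_L(n)·ψ_R(n−1)`, `ψ_R(n) = −c·φ_R(n)·ψ_L(n−1)`. -/
noncomputable def psiPair (α z c : ℂ) : ℕ → ℂ × ℂ
  | 0 => (-1 / z, -1 / z)
  | n + 1 => (-c * (phiPair α z (n + 1)).1 * (psiPair α z c n).2,
              -c * (phiPair α z (n + 1)).2 * (psiPair α z c n).1)

lemma phi_closed (α z : ℂ) (hz : z ≠ 0) (hα0 : α ≠ 0)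
    (hq : ∀ n : ℕ, Qc α z (n + 1) ≠ 0)
    (h1 : ∀ n : ℕ, Qc α z (n + 2) + Qc α z (n + 1) ≠ 0)
    (h2 : ∀ n : ℕ, Qc α z (n + 2) + α⁻¹ * Qc α z (n + 1) ≠ 0) :
    ∀ n : ℕ,
      (phiPair α z (2 * n)).1 = -(Qc α z (n + 1) + α⁻¹ * Qc α z n) / (z * Qc α z (n + 1)) ∧
      (phiPair α z (2 * n)).2 = -(Qc α z (n + 1) + Qc α z n) / (z * Qc α z (n + 1)) ∧
      (phiPair α z (2 * n + 1)).1 = -(z * Qc α z (n + 1)) / (Qc α z (n + 2) + Qc α z (n + 1)) ∧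
      (phiPair α z (2 * n + 1)).2 = -(z * Qc α z (n + 1)) / (Qc α z (n + 2) + α⁻¹ * Qc α z (n + 1)) := by
  have hQ0 : Qc α z 0 = 0 := rfl
  have hQ1 : Qc α z (0 + 1) = 1 := rfl
  have hQ2 : Qc α z (0 + 2) = (z ^ 2 - α⁻¹ - 1) * 1 - α⁻¹ * 0 := rfl
  intro n
  induction n with
  | zero =>
    have hA := h1 0
    have hB := h2 0
    rw [hQ1, hQ2] at hA hB
    refine ⟨?_, ?_, ?_, ?_⟩
    · show (-1 / z : ℂ) = _
      rw [hQ1, hQ0]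
      field_simp
      ring
    · show (-1 / z : ℂ) = _
      rw [hQ1, hQ0]
      field_simp
      ring
    · show -(z + α⁻¹ * (-1 / z))⁻¹ = _
      have key : z + α⁻¹ * (-1 / z) = (((z ^ 2 - α⁻¹ - 1) * 1 - α⁻¹ * 0) + 1) / z := by
        generalize hβ : α⁻¹ = β
        field_simp
        ring
      rw [key, inv_div, hQ1, hQ2, neg_div]
      norm_num
    · show -(z + (-1 / z))⁻¹ = _
      have key : z + (-1 / z) = (((z ^ 2 - α⁻¹ - 1) * 1 - α⁻¹ * 0) + α⁻¹ * 1) / z := by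
        generalize hβ : α⁻¹ = β
        field_simp
        ring
      rw [key, inv_div, hQ1, hQ2, neg_div]
      norm_num
  | succ n ih =>
    obtain ⟨iL, iR, oL, oR⟩ := ih
    have q1 := hq n
    have q2 := hq (n + 1)
    have s1 := h1 n
    have s2 := h2 n
    have h22 : 2 * (n + 1) = (2 * n + 1) + 1 := by ring
    have hQ3 : Qc α z (n + 1 + 2) = (z ^ 2 - α⁻¹ - 1) * Qc α z (n + 2) - α⁻¹ * Qc α z (n + 1) := rfl
    have e1 : (phiPair α z (2 * (n + 1))).1
        = -(Qc α z (n + 2) + α⁻¹ * Qc α z (n + 1)) / (z * Qc α z (n + 2)) := by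
      rw [h22]
      show -(z + α⁻¹ * (phiPair α z (2 * n + 1)).2)⁻¹ = _
      rw [oR]
      have key : z + α⁻¹ * (-(z * Qc α z (n + 1)) / (Qc α z (n + 2) + α⁻¹ * Qc α z (n + 1)))
          = z * Qc α z (n + 2) / (Qc α z (n + 2) + α⁻¹ * Qc α z (n + 1)) := by
        generalize hβ : α⁻¹ = β at s2 ⊢
        field_simp
        ring
      rw [key, inv_div, neg_div]
    have e2 : (phiPair α z (2 * (n + 1))).2
        = -(Qc α z (n + 2) + Qc α z (n + 1)) / (z * Qc α z (n + 2)) := by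
      rw [h22]
      show -(z + (phiPair α z (2 * n + 1)).1)⁻¹ = _
      rw [oL]
      have key : z + (-(z * Qc α z (n + 1)) / (Qc α z (n + 2) + Qc α z (n + 1)))
          = z * Qc α z (n + 2) / (Qc α z (n + 2) + Qc α z (n + 1)) := by
        field_simp
        ring
      rw [key, inv_div, neg_div]
    refine ⟨e1, e2, ?_, ?_⟩
    · show -(z + α⁻¹ * (phiPair α z (2 * (n + 1))).2)⁻¹ = _
      rw [e2]
      have key : z + α⁻¹ * (-(Qc α z (n + 2) + Qc α z (n + 1)) / (z * Qc α z (n + 2)))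
          = (Qc α z (n + 1 + 2) + Qc α z (n + 2)) / (z * Qc α z (n + 2)) := by
        rw [hQ3]
        generalize hβ : α⁻¹ = β at q2 ⊢
        field_simp
        ring
      rw [key, inv_div, neg_div]
    · show -(z + (phiPair α z (2 * (n + 1))).1)⁻¹ = _
      rw [e1]
      have key : z + (-(Qc α z (n + 2) + α⁻¹ * Qc α z (n + 1)) / (z * Qc α z (n + 2)))
          = (Qc α z (n + 1 + 2) + α⁻¹ * Qc α z (n + 2)) / (z * Qc α z (n + 2)) := by
        rw [hQ3]
        generalize hβ : α⁻¹ = β at q2 ⊢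
        field_simp
        ring
      rw [key, inv_div, neg_div]

lemma psi_closed (α z c B : ℂ) (hz : z ≠ 0) (hα0 : α ≠ 0) (hB : B ≠ 0) (hc : c * c = B⁻¹)
    (hq : ∀ n : ℕ, Qc α z (n + 1) ≠ 0)
    (h1 : ∀ n : ℕ, Qc α z (n + 2) + Qc α z (n + 1) ≠ 0)
    (h2 : ∀ n : ℕ, Qc α z (n + 2) + α⁻¹ * Qc α z (n + 1) ≠ 0) :
    ∀ n : ℕ,
      (psiPair α z c (2 * n)).1 = -(B ^ n)⁻¹ / (z * Qc α z (n + 1)) ∧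
      (psiPair α z c (2 * n)).2 = -(B ^ n)⁻¹ / (z * Qc α z (n + 1)) := by
  have hQ1 : Qc α z (0 + 1) = 1 := rfl
  intro n
  induction n with
  | zero =>
    refine ⟨?_, ?_⟩ <;>
    · show (-1 / z : ℂ) = _
      rw [hQ1, pow_zero]
      norm_num
  | succ n ih =>
    obtain ⟨iL, iR⟩ := ih
    obtain ⟨pe1, pe2, _, _⟩ := phi_closed α z hz hα0 hq h1 h2 (n + 1)
    obtain ⟨_, _, qo1, qo2⟩ := phi_closed α z hz hα0 hq h1 h2 n
    have q1 := hq n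
    have q2 := hq (n + 1)
    have s1 := h1 n
    have s2 := h2 n
    have h22 : 2 * (n + 1) = (2 * n + 1) + 1 := by ring
    have hBp : (B : ℂ) ^ n ≠ 0 := pow_ne_zero n hB
    have prod1 : (phiPair α z (2 * (n + 1))).1 * (phiPair α z (2 * n + 1)).2
        = Qc α z (n + 1) / Qc α z (n + 2) := by
      rw [pe1, qo2]
      generalize hβ : α⁻¹ = β at s2 ⊢
      field_simp
    have prod2 : (phiPair α z (2 * (n + 1))).2 * (phiPair α z (2 * n + 1)).1
        = Qc α z (n + 1) / Qc α z (n + 2) := by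
      rw [pe2, qo1]
      field_simp
    have step1 : (psiPair α z c (2 * (n + 1))).1
        = (c * c) * ((phiPair α z (2 * (n + 1))).1 * (phiPair α z (2 * n + 1)).2)
          * (psiPair α z c (2 * n)).1 := by
      rw [h22]
      show -c * (phiPair α z (2 * n + 1 + 1)).1 *
          (-c * (phiPair α z (2 * n + 1)).2 * (psiPair α z c (2 * n)).1) = _
      rw [← h22]
      ring
    have step2 : (psiPair α z c (2 * (n + 1))).2
        = (c * c) * ((phiPair α z (2 * (n + 1))).2 * (phiPair α z (2 * n + 1)).1)
          * (psiPair α z c (2 * n)).2 := by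
      rw [h22]
      show -c * (phiPair α z (2 * n + 1 + 1)).2 *
          (-c * (phiPair α z (2 * n + 1)).1 * (psiPair α z c (2 * n)).2) = _
      rw [← h22]
      ring
    have fin : B⁻¹ * (Qc α z (n + 1) / Qc α z (n + 2)) * (-(B ^ n)⁻¹ / (z * Qc α z (n + 1)))
        = -(B ^ (n + 1))⁻¹ / (z * Qc α z (n + 1 + 1)) := by
      rw [pow_succ]
      field_simp
    exact ⟨by rw [step1, hc, prod1, iL, fin], by rw [step2, hc, prod2, iR, fin]⟩

/-- With `α = (d_R−1)/(d_L−1)`, one has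
`ψ_L(2ζ) = ψ_R(2ζ) = −(d_R−1)^{−ζ}/(z·q_ζ(z))` for all `ζ ≥ 0`
(when the relevant denominators are nonzero). -/
theorem stmt12 (dL dR : ℕ) (hdL : 2 ≤ dL) (hdR : 2 ≤ dR) (z : ℂ) (hz : z ≠ 0)
    (α : ℂ) (hα : α = ((dR : ℂ) - 1) / ((dL : ℂ) - 1))
    (hq : ∀ n : ℕ, Qc α z (n + 1) ≠ 0)
    (h1 : ∀ n : ℕ, Qc α z (n + 2) + Qc α z (n + 1) ≠ 0)
    (h2 : ∀ n : ℕ, Qc α z (n + 2) + α⁻¹ * Qc α z (n + 1) ≠ 0) :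
    ∀ ζ : ℕ,
      (psiPair α z ((Real.sqrt ((dR : ℝ) - 1) : ℂ))⁻¹ (2 * ζ)).1
          = -((((dR : ℂ) - 1) ^ ζ)⁻¹) / (z * Qc α z (ζ + 1)) ∧
      (psiPair α z ((Real.sqrt ((dR : ℝ) - 1) : ℂ))⁻¹ (2 * ζ)).2
          = -((((dR : ℂ) - 1) ^ ζ)⁻¹) / (z * Qc α z (ζ + 1)) := by
  have hB : ((dR : ℂ) - 1) ≠ 0 := sub_ne_zero.mpr (by exact_mod_cast (by omega : dR ≠ 1))
  have hα0 : α ≠ 0 := by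
    rw [hα]
    exact div_ne_zero hB (sub_ne_zero.mpr (by exact_mod_cast (by omega : dL ≠ 1)))
  have hnn : (0 : ℝ) ≤ (dR : ℝ) - 1 := by
    have : (2 : ℝ) ≤ (dR : ℝ) := by exact_mod_cast hdR
    linarith
  have hc : ((Real.sqrt ((dR : ℝ) - 1) : ℂ))⁻¹ * ((Real.sqrt ((dR : ℝ) - 1) : ℂ))⁻¹
      = ((dR : ℂ) - 1)⁻¹ := by
    rw [← mul_inv]
    congr 1
    rw [← Complex.ofReal_mul, Real.mul_self_sqrt hnn]
    push_cast
    ring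
  intro ζ
  exact psi_closed α z _ ((dR : ℂ) - 1) hz hα0 hB hc hq h1 h2 ζ
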